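/- There is an NFA with O(n²) states recognizing the complement language {0,1}^* \ ⟨Disj^n_k⟩, where ⟨Disj^n_k⟩ = { ⟨S⟩⟨T⟩ : S, T ⊆ [n], |S| = |T| = k, S ∩ T = ∅ } and ⟨S⟩ ∈ {0,1}^n is the characteristic vector of S. -/

import Mathlib

/-- The characteristic word `⟨S⟩ ∈ {0,1}^n` of a set `S ⊆ [n]`. -/
def encSet {n : ℕ} (S : Finset (Fin n)) : List Bool :=
  List.ofFn fun i : Fin n => decide (i ∈ S)

set_option linter.unnecessarySeqFocus false

namespace UfaAux

/-- Disjoint union of a family of DFAs, as an NFA recognizing the union language. -/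
def unionDFA {ι : Type} {σ : ι → Type} (D : ∀ i, DFA Bool (σ i)) :
    NFA Bool (Σ i, σ i) where
  step s a := {⟨s.1, (D s.1).step s.2 a⟩}
  start := Set.range fun i => ⟨i, (D i).start⟩
  accept := {s | s.2 ∈ (D s.1).accept}

lemma unionDFA_evalFrom {ι : Type} {σ : ι → Type} (D : ∀ i, DFA Bool (σ i))
    (w : List Bool) : ∀ s : ∀ i, σ i,
    (unionDFA D).evalFrom (Set.range fun i => ⟨i, s i⟩) w
      = Set.range fun i => (⟨i, (D i).evalFrom (s i) w⟩ : Σ i, σ i) := by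
  induction w with
  | nil => intro s; simp
  | cons a w ih =>
    intro s
    have hstep : (unionDFA D).stepSet (Set.range fun i => ⟨i, s i⟩) a
        = Set.range fun i => (⟨i, (D i).step (s i) a⟩ : Σ i, σ i) := by
      ext x
      simp only [NFA.mem_stepSet, unionDFA, Set.mem_range, Set.mem_singleton_iff]
      constructor
      · rintro ⟨t, ⟨i, rfl⟩, rfl⟩; exact ⟨i, rfl⟩
      · rintro ⟨i, rfl⟩; exact ⟨⟨i, s i⟩, ⟨i, rfl⟩, rfl⟩
    show (unionDFA D).evalFrom _ (a :: w) = _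
    rw [NFA.evalFrom, List.foldl_cons, ← NFA.evalFrom, hstep, ih]
    rfl

lemma unionDFA_accepts {ι : Type} {σ : ι → Type} (D : ∀ i, DFA Bool (σ i))
    (w : List Bool) : w ∈ (unionDFA D).accepts ↔ ∃ i, w ∈ (D i).accepts := by
  rw [NFA.mem_accepts]
  have := unionDFA_evalFrom D w (fun i => (D i).start)
  simp only [unionDFA] at this ⊢
  rw [this]
  constructor
  · rintro ⟨x, hx, ⟨i, rfl⟩⟩; exact ⟨i, hx⟩
  · rintro ⟨i, hi⟩; exact ⟨⟨i, (D i).evalFrom (D i).start w⟩, hi, ⟨i, rfl⟩⟩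



variable (n k : ℕ)

def capN (m : ℕ) : Fin (2 * n + 2) := ⟨min m (2 * n + 1), by omega⟩

def capK (c : ℕ) : Fin (k + 2) := ⟨min c (k + 1), by omega⟩

lemma capN_succ (m : ℕ) : capN n ((capN n m).val + 1) = capN n (m + 1) := by
  simp only [capN]; ext; simp

lemma capK_succ (c : ℕ) : capK k ((capK k c).val + 1) = capK k (c + 1) := by
  simp only [capK]; ext; simp

/-- DFA accepting words of length ≠ 2n. -/
def lenDFA : DFA Bool (Fin (2 * n + 2)) where
  step s _ := capN n (s.val + 1)
  start := capN n 0
  accept := {s | s.val ≠ 2 * n}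

lemma lenDFA_eval (w : List Bool) : (lenDFA n).eval w = capN n w.length := by
  induction w using List.reverseRecOn with
  | nil => rfl
  | append_singleton w a ih =>
    rw [DFA.eval_append_singleton, ih]
    show capN n _ = _
    rw [capN_succ]
    simp

lemma lenDFA_accepts (w : List Bool) : w ∈ (lenDFA n).accepts ↔ w.length ≠ 2 * n := by
  rw [DFA.mem_accepts, lenDFA_eval]
  show ¬ (min w.length (2*n+1) = 2*n) ↔ _
  omega

/-- DFA accepting words of length 2n whose first half does not have exactly k ones. -/
def cnt1DFA : DFA Bool (Fin (2 * n + 2) × Fin (k + 2)) where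
  step s a := (capN n (s.1.val + 1), if s.1.val < n ∧ a = true then capK k (s.2.val + 1) else s.2)
  start := (capN n 0, capK k 0)
  accept := {s | s.1.val = 2 * n ∧ s.2.val ≠ k}

lemma cnt1DFA_eval (w : List Bool) :
    (cnt1DFA n k).eval w = (capN n w.length, capK k ((w.take n).count true)) := by
  induction w using List.reverseRecOn with
  | nil => simp only [DFA.eval_nil, List.take_nil, List.count_nil, List.length_nil]; rfl
  | append_singleton w a ih =>
    rw [DFA.eval_append_singleton, ih]
    show (capN n _, if (capN n w.length).val < n ∧ a = true then _ else _) = _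
    have hcap : (capN n w.length).val < n ↔ w.length < n := by simp [capN]; omega
    have htake : (w ++ [a]).take n = w.take n ++ [a].take (n - w.length) := List.take_append
    rw [capN_succ]
    rcases Nat.lt_or_ge w.length n with h | h
    · have : [a].take (n - w.length) = [a] := by
        rw [List.take_of_length_le]; simp; omega
      rw [htake, this] at *
      cases a
      · simp [hcap, h, List.count_append]
      · simp [hcap, h, List.count_append, capK_succ]
    · have : [a].take (n - w.length) = [] := by
        have : n - w.length = 0 := by omega
        simp [this]
      rw [htake, this, List.append_nil]
      simp [hcap]; omega

lemma cnt1DFA_accepts (w : List Bool) :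
    w ∈ (cnt1DFA n k).accepts ↔ w.length = 2 * n ∧ (w.take n).count true ≠ k := by
  rw [DFA.mem_accepts, cnt1DFA_eval]
  show (min w.length (2*n+1) = 2*n ∧ ¬ (min ((w.take n).count true) (k+1) = k)) ↔ _
  constructor
  · rintro ⟨h1, h2⟩; exact ⟨by omega, by omega⟩
  · rintro ⟨h1, h2⟩; exact ⟨by omega, by omega⟩

/-- DFA accepting words of length 2n whose second half does not have exactly k ones. -/
def cnt2DFA : DFA Bool (Fin (2 * n + 2) × Fin (k + 2)) where
  step s a := (capN n (s.1.val + 1),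
    if (n ≤ s.1.val ∧ s.1.val < 2 * n) ∧ a = true then capK k (s.2.val + 1) else s.2)
  start := (capN n 0, capK k 0)
  accept := {s | s.1.val = 2 * n ∧ s.2.val ≠ k}

lemma cnt2DFA_eval (w : List Bool) :
    (cnt2DFA n k).eval w = (capN n w.length, capK k (((w.drop n).take n).count true)) := by
  induction w using List.reverseRecOn with
  | nil => simp only [DFA.eval_nil, List.drop_nil, List.take_nil, List.count_nil,
      List.length_nil]; rfl
  | append_singleton w a ih =>
    rw [DFA.eval_append_singleton, ih]
    show (capN n _, if (n ≤ (capN n w.length).val ∧ (capN n w.length).val < 2*n) ∧ a = true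
        then _ else _) = _
    have hcap : (n ≤ (capN n w.length).val ∧ (capN n w.length).val < 2*n) ↔
        (n ≤ w.length ∧ w.length < 2*n) := by simp [capN]; omega
    have hdrop : (w ++ [a]).drop n = w.drop n ++ [a].drop (n - w.length) := List.drop_append
    rw [capN_succ]
    rcases Nat.lt_or_ge w.length n with h | h
    · have h1 : [a].drop (n - w.length) = [] := by
        apply List.drop_of_length_le; simp; omega
      rw [hdrop, h1, List.append_nil]
      simp [hcap]; omega
    · have h1 : [a].drop (n - w.length) = [a] := by
        have : n - w.length = 0 := by omega
        simp [this]
      rw [hdrop, h1]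
      have htake : (w.drop n ++ [a]).take n = (w.drop n).take n ++ [a].take (n - (w.drop n).length) :=
        List.take_append
      rw [htake]
      rcases Nat.lt_or_ge w.length (2*n) with h2 | h2
      · have h3 : [a].take (n - (w.drop n).length) = [a] := by
          rw [List.take_of_length_le]; simp; omega
        rw [h3]
        have h4 : (w.drop n).take n = w.drop n := by
          rw [List.take_of_length_le]; simp; omega
        rw [h4] at *
        cases a
        · simp [hcap, h, h2, List.count_append]
        · simp [hcap, h, h2, List.count_append, capK_succ]
      · have h0 : n - (w.drop n).length = 0 := by
          simp only [List.length_drop]; omega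
        rw [h0, List.take_zero, List.append_nil]
        simp [hcap]; omega

lemma cnt2DFA_accepts (w : List Bool) :
    w ∈ (cnt2DFA n k).accepts ↔ w.length = 2 * n ∧ ((w.drop n).take n).count true ≠ k := by
  rw [DFA.mem_accepts, cnt2DFA_eval]
  show (min w.length (2*n+1) = 2*n ∧ ¬ (min (((w.drop n).take n).count true) (k+1) = k)) ↔ _
  constructor
  · rintro ⟨h1, h2⟩; exact ⟨by omega, by omega⟩
  · rintro ⟨h1, h2⟩; exact ⟨by omega, by omega⟩




/-- DFA (for a fixed `i < n`) accepting words of length `2n` with a `1` in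
positions `i` and `n + i`. -/
def colDFA (i : Fin n) : DFA Bool (Fin (2 * n + 2)) where
  step s a := if s.val < 2 * n ∧ ((s.val = i.val ∨ s.val = n + i.val) → a = true)
    then capN n (s.val + 1) else ⟨2 * n + 1, by omega⟩
  start := capN n 0
  accept := {s | s.val = 2 * n}

def colOK (i : Fin n) (w : List Bool) : Prop :=
  w.length ≤ 2 * n ∧ (i.val < w.length → w[i.val]? = some true) ∧
    (n + i.val < w.length → w[n + i.val]? = some true)

instance (i : Fin n) (w : List Bool) : Decidable (colOK n i w) := by
  unfold colOK; infer_instance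

lemma colOK_mono (i : Fin n) (w : List Bool) (a : Bool) (h : colOK n i (w ++ [a])) :
    colOK n i w := by
  obtain ⟨h1, h2, h3⟩ := h
  simp only [List.length_append, List.length_singleton] at h1
  refine ⟨by omega, fun hi => ?_, fun hi => ?_⟩
  · have := h2 (by simp; omega)
    rwa [List.getElem?_append, if_pos hi] at this
  · have := h3 (by simp; omega)
    rwa [List.getElem?_append, if_pos hi] at this

lemma colDFA_eval (i : Fin n) (w : List Bool) :
    (colDFA n i).eval w
      = if colOK n i w then capN n w.length else ⟨2 * n + 1, by omega⟩ := by
  induction w using List.reverseRecOn with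
  | nil =>
    rw [DFA.eval_nil, if_pos]
    · rfl
    · exact ⟨by simp, by simp, by simp⟩
  | append_singleton w a ih =>
    rw [DFA.eval_append_singleton, ih]
    by_cases hw : colOK n i w
    · rw [if_pos hw]
      have hval : (capN n w.length).val = w.length := by
        simp only [capN]; have := hw.1; omega
      show (if (capN n w.length).val < 2 * n ∧
          (((capN n w.length).val = i.val ∨ (capN n w.length).val = n + i.val) → a = true)
          then capN n ((capN n w.length).val + 1) else ⟨2 * n + 1, by omega⟩) = _
      rw [hval]
      by_cases hc : w.length < 2 * n ∧ ((w.length = i.val ∨ w.length = n + i.val) → a = true)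
      · have hnew : colOK n i (w ++ [a]) := by
          refine ⟨by simp; omega, fun hi => ?_, fun hi => ?_⟩
          · simp only [List.length_append, List.length_singleton] at hi
            rcases Nat.lt_or_ge i.val w.length with h' | h'
            · rw [List.getElem?_append, if_pos h']
              exact hw.2.1 h'
            · have hii : i.val = w.length := by omega
              rw [hii, List.getElem?_concat_length]
              have := hc.2 (Or.inl hii.symm)
              rw [this]
          · simp only [List.length_append, List.length_singleton] at hi
            rcases Nat.lt_or_ge (n + i.val) w.length with h' | h'
            · rw [List.getElem?_append, if_pos h']
              exact hw.2.2 h'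
            · have hii : n + i.val = w.length := by omega
              rw [hii, List.getElem?_concat_length]
              have := hc.2 (Or.inr hii.symm)
              rw [this]
        rw [if_pos hc, if_pos hnew]
        congr 1
        simp
      · have hnot : ¬ colOK n i (w ++ [a]) := by
          intro hnew
          apply hc
          obtain ⟨h1, h2, h3⟩ := hnew
          simp only [List.length_append, List.length_singleton] at h1
          constructor
          · omega
          · rintro (hii | hii)
            · have := h2 (by simp; omega)
              rw [← hii, List.getElem?_concat_length] at this
              exact (Option.some_inj.mp this)
            · have := h3 (by simp; omega)
              rw [← hii, List.getElem?_concat_length] at this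
              exact (Option.some_inj.mp this)
        rw [if_neg hc, if_neg hnot]
    · rw [if_neg hw, if_neg (fun h => hw (colOK_mono n i w a h))]
      show (if (2 * n + 1 : ℕ) < 2 * n ∧ (((2 * n + 1 : ℕ) = i.val ∨ (2 * n + 1 : ℕ) = n + i.val) → a = true) then capN n (2 * n + 1 + 1) else ⟨2 * n + 1, by omega⟩) = ⟨2 * n + 1, by omega⟩
      rw [if_neg]
      rintro ⟨h, -⟩
      omega

lemma colDFA_accepts (i : Fin n) (w : List Bool) :
    w ∈ (colDFA n i).accepts ↔
      w.length = 2 * n ∧ w[i.val]? = some true ∧ w[n + i.val]? = some true := by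
  rw [DFA.mem_accepts, colDFA_eval]
  by_cases hw : colOK n i w
  · rw [if_pos hw]
    show min w.length (2 * n + 1) = 2 * n ↔ _
    constructor
    · intro h
      have hlen : w.length = 2 * n := by omega
      exact ⟨hlen, hw.2.1 (by omega), hw.2.2 (by have := i.isLt; omega)⟩
    · rintro ⟨h, -, -⟩; omega
  · rw [if_neg hw]
    show (2 * n + 1 : ℕ) = 2 * n ↔ _
    constructor
    · omega
    · rintro ⟨h1, h2, h3⟩
      exact absurd ⟨by omega, fun _ => h2, fun _ => h3⟩ hw



lemma length_encSet {n : ℕ} (S : Finset (Fin n)) : (encSet S).length = n := by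
  simp [encSet]

lemma count_true_eq_sum (l : List Bool) : l.count true = (l.map Bool.toNat).sum := by
  induction l with
  | nil => rfl
  | cons a l ih =>
    cases a <;> simp [List.count_cons, ih] <;> omega

lemma count_encSet {n : ℕ} (S : Finset (Fin n)) : (encSet S).count true = S.card := by
  rw [count_true_eq_sum, encSet, List.map_ofFn, List.sum_ofFn]
  have : ∀ i : Fin n, (Function.comp Bool.toNat (fun i => decide (i ∈ S))) i
      = if i ∈ S then 1 else 0 := by
    intro i
    by_cases h : i ∈ S <;> simp [h]
  rw [Finset.sum_congr rfl fun i _ => this i, Finset.sum_ite_mem]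
  simp

lemma getElem?_encSet {n : ℕ} (S : Finset (Fin n)) (j : ℕ) (h : j < n) :
    (encSet S)[j]? = some (decide ((⟨j, h⟩ : Fin n) ∈ S)) := by
  rw [List.getElem?_eq_getElem (by rw [length_encSet]; exact h)]
  congr 1
  simp [encSet]

lemma decide_some_eq_true (b : Bool) : decide (some b = some true) = b := by
  cases b <;> simp

lemma main_iff (n k : ℕ) (w : List Bool) :
    (w.length ≠ 2 * n ∨ (w.length = 2 * n ∧ (w.take n).count true ≠ k)
      ∨ (w.length = 2 * n ∧ ((w.drop n).take n).count true ≠ k)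
      ∨ ∃ i : Fin n, w.length = 2 * n ∧ w[i.val]? = some true ∧ w[n + i.val]? = some true)
    ↔ ¬ ∃ S T : Finset (Fin n), S.card = k ∧ T.card = k ∧ Disjoint S T ∧
        w = encSet S ++ encSet T := by
  constructor
  · intro h
    rintro ⟨S, T, hS, hT, hd, rfl⟩
    have hlS := length_encSet S
    have hlT := length_encSet T
    have hlen : (encSet S ++ encSet T).length = 2 * n := by
      simp [hlS, hlT]; omega
    have htake : (encSet S ++ encSet T).take n = encSet S := List.take_left' hlS
    have hdrop : (encSet S ++ encSet T).drop n = encSet T := List.drop_left' hlS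
    rcases h with h | ⟨-, h⟩ | ⟨-, h⟩ | ⟨i, -, h1, h2⟩
    · exact h hlen
    · rw [htake, count_encSet] at h; exact h hS
    · rw [hdrop, List.take_of_length_le (le_of_eq hlT), count_encSet] at h; exact h hT
    · have e1 : (encSet S ++ encSet T)[i.val]? = (encSet S)[i.val]? := by
        rw [List.getElem?_append, if_pos (by rw [hlS]; exact i.isLt)]
      have e2 : (encSet S ++ encSet T)[n + i.val]? = (encSet T)[i.val]? := by
        rw [List.getElem?_append, if_neg (by rw [hlS]; omega)]
        congr 1
        rw [hlS]; omega
      rw [e1, getElem?_encSet S i.val i.isLt] at h1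
      rw [e2, getElem?_encSet T i.val i.isLt] at h2
      simp only [Option.some_inj, decide_eq_true_iff] at h1 h2
      have hi : (⟨i.val, i.isLt⟩ : Fin n) = i := rfl
      rw [hi] at h1 h2
      exact (Finset.disjoint_left.mp hd) h1 h2
  · intro h
    by_contra h2
    push_neg at h2
    obtain ⟨hlen, hc1, hc2, hcol⟩ := h2
    apply h
    set S : Finset (Fin n) := Finset.univ.filter (fun i : Fin n => w[i.val]? = some true) with hSdef
    set T : Finset (Fin n) := Finset.univ.filter (fun i : Fin n => w[n + i.val]? = some true)
      with hTdef
    have memS : ∀ i : Fin n, i ∈ S ↔ w[i.val]? = some true := by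
      intro i; simp [hSdef]
    have memT : ∀ i : Fin n, i ∈ T ↔ w[n + i.val]? = some true := by
      intro i; simp [hTdef]
    have hencS : encSet S = w.take n := by
      apply List.ext_getElem?
      intro j
      rcases Nat.lt_or_ge j n with hj | hj
      · rw [getElem?_encSet S j hj, List.getElem?_take, if_pos hj]
        have hjw : j < w.length := by omega
        rw [List.getElem?_eq_getElem hjw]
        congr 1
        simp only [memS]
        rw [List.getElem?_eq_getElem hjw]
        exact decide_some_eq_true _
      · rw [List.getElem?_eq_none (by rw [length_encSet]; exact hj),
          List.getElem?_eq_none (by rw [List.length_take]; omega)]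
    have hencT : encSet T = w.drop n := by
      apply List.ext_getElem?
      intro j
      rcases Nat.lt_or_ge j n with hj | hj
      · rw [getElem?_encSet T j hj, List.getElem?_drop]
        have hjw : n + j < w.length := by omega
        rw [List.getElem?_eq_getElem hjw]
        congr 1
        simp only [memT]
        rw [List.getElem?_eq_getElem hjw]
        exact decide_some_eq_true _
      · rw [List.getElem?_eq_none (by rw [length_encSet]; exact hj),
          List.getElem?_eq_none (by rw [List.length_drop]; omega)]
    refine ⟨S, T, ?_, ?_, ?_, ?_⟩
    · rw [← count_encSet S, hencS]; exact hc1 hlen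
    · rw [← count_encSet T, hencT]
      have := hc2 hlen
      rwa [List.take_of_length_le (by rw [List.length_drop]; omega)] at this
    · rw [Finset.disjoint_left]
      intro i hiS hiT
      exact hcol i hlen ((memS i).mp hiS) ((memT i).mp hiT)
    · rw [hencS, hencT, List.take_append_drop]


def stT (n k : ℕ) : Option (Bool ⊕ Fin n) → Type
  | none => Fin (2 * n + 2)
  | some (.inl _) => Fin (2 * n + 2) × Fin (k + 2)
  | some (.inr _) => Fin (2 * n + 2)

instance stTFintype (n k : ℕ) : ∀ o, Fintype (stT n k o)
  | none => inferInstanceAs (Fintype (Fin (2 * n + 2)))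
  | some (.inl _) => inferInstanceAs (Fintype (Fin (2 * n + 2) × Fin (k + 2)))
  | some (.inr _) => inferInstanceAs (Fintype (Fin (2 * n + 2)))

def theD (n k : ℕ) : ∀ o, DFA Bool (stT n k o)
  | none => lenDFA n
  | some (.inl false) => cnt1DFA n k
  | some (.inl true) => cnt2DFA n k
  | some (.inr i) => colDFA n i

lemma card_stT (n k : ℕ) :
    Fintype.card (Σ o, stT n k o)
      = (2 * n + 2) + 2 * ((2 * n + 2) * (k + 2)) + n * (2 * n + 2) := by
  rw [Fintype.card_sigma, Fintype.sum_option, Fintype.sum_sum_type]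
  have h1 : Fintype.card (stT n k none) = 2 * n + 2 := by
    simp [stT]
    exact Fintype.card_fin _
  have h2 : ∀ b : Bool, Fintype.card (stT n k (some (.inl b))) = (2 * n + 2) * (k + 2) := by
    intro b; simp [stT]
    exact (Fintype.card_prod _ _).trans (by simp)
  have h3 : ∀ i : Fin n, Fintype.card (stT n k (some (.inr i))) = 2 * n + 2 := by
    intro i; simp [stT]
    exact Fintype.card_fin _
  rw [h1]
  rw [Finset.sum_congr rfl fun b _ => h2 b, Finset.sum_congr rfl fun i _ => h3 i]
  simp [Finset.sum_const, Finset.card_univ, mul_comm]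
  ring

lemma theD_accepts (n k : ℕ) (w : List Bool) :
    (∃ o, w ∈ (theD n k o).accepts) ↔
      (w ∈ (lenDFA n).accepts ∨ w ∈ (cnt1DFA n k).accepts ∨ w ∈ (cnt2DFA n k).accepts
        ∨ ∃ i : Fin n, w ∈ (colDFA n i).accepts) := by
  constructor
  · rintro ⟨(_ | (b | i)), h⟩
    · exact Or.inl h
    · cases b
      · exact Or.inr (Or.inl h)
      · exact Or.inr (Or.inr (Or.inl h))
    · exact Or.inr (Or.inr (Or.inr ⟨i, h⟩))
  · rintro (h | h | h | ⟨i, h⟩)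
    exacts [⟨none, h⟩, ⟨some (.inl false), h⟩, ⟨some (.inl true), h⟩, ⟨some (.inr i), h⟩]

end UfaAux

open UfaAux in
/-- There is an NFA with `O(n²)` states recognizing the complement
language `{0,1}^* \\ ⟨Disj^n_k⟩`. -/
theorem ufa_stmt13 : ∃ C : ℕ, ∀ n k : ℕ, k ≤ n →
    ∃ (σ : Type) (_ : Fintype σ) (M : NFA Bool σ),
      Fintype.card σ ≤ C * (n ^ 2 + 1) ∧
      ∀ w : List Bool, w ∈ M.accepts ↔
        ¬ ∃ S T : Finset (Fin n), S.card = k ∧ T.card = k ∧ Disjoint S T ∧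
            w = encSet S ++ encSet T := by
  refine ⟨100, fun n k hk => ⟨Σ o : Option (Bool ⊕ Fin n), stT n k o, inferInstance,
    unionDFA (theD n k), ?_, fun w => ?_⟩⟩
  · rw [card_stT]
    nlinarith [sq_nonneg n, sq_nonneg (n - k : ℤ)]
  · refine ((unionDFA_accepts (theD n k) w).trans ((theD_accepts n k w).trans ?_))
    rw [lenDFA_accepts, cnt1DFA_accepts, cnt2DFA_accepts]
    refine Iff.trans ?_ (main_iff n k w)
    constructor
    · rintro (h | h | h | ⟨i, hi⟩)
      · exact Or.inl h
      · exact Or.inr (Or.inl h)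
      · exact Or.inr (Or.inr (Or.inl h))
      · exact Or.inr (Or.inr (Or.inr ⟨i, (colDFA_accepts n i w).mp hi⟩))
    · rintro (h | h | h | ⟨i, hi⟩)
      · exact Or.inl h
      · exact Or.inr (Or.inl h)
      · exact Or.inr (Or.inr (Or.inl h))
      · exact Or.inr (Or.inr (Or.inr ⟨i, (colDFA_accepts n i w).mpr hi⟩))
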